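/- The number of MAPWs of a string S over an alphabet of size σ is at most (p+1)·σ, where p is the number of distinct palindromic substrings of S including the empty string. -/

import Mathlib

/-- `w` is a minimal absent palindromic word of `S`. -/
def IsMAPW {α : Type*} (S w : List α) : Prop :=
  w.reverse = w ∧ ¬ w <:+: S ∧ (w.drop 1).dropLast <:+: S

private lemma mapw_recon {α : Type*} {w : List α} (hp : w.reverse = w) (h2 : w.drop 1 ≠ []) :
    ∃ c, w = c :: ((w.drop 1).dropLast ++ [c]) := by
  match w, h2 with
  | a :: b :: t, _ =>
    refine ⟨a, ?_⟩
    have h1 : (b :: t).getLast? = some a := by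
      have h := List.head?_reverse (l := a :: b :: t)
      rw [hp] at h
      simpa [List.getLast?_cons_cons] using h.symm
    have h3 : (b :: t).getLast (by simp) = a := by
      have := List.getLast?_eq_getLast (l := b :: t) (by simp)
      rw [this] at h1
      exact Option.some_injective _ h1
    have h4 := List.dropLast_concat_getLast (l := b :: t) (by simp)
    rw [h3] at h4
    simpa using h4.symm

theorem mapw_count_bound {α : Type*} [Fintype α] [DecidableEq α] (S : List α) :
    {w : List α | IsMAPW S w}.Finite ∧
    {w : List α | IsMAPW S w}.ncard ≤
      (((S.tails.flatMap List.inits).filter (fun w => w.reverse == w)).dedup.length + 1)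
        * Fintype.card α := by
  classical
  set L := ((S.tails.flatMap List.inits).filter (fun w => w.reverse == w)).dedup with hLdef
  set M := {w : List α | IsMAPW S w} with hMdef
  have hmemL : ∀ m : List α, m.reverse = m → m <:+: S → m ∈ L := by
    intro m hm hinf
    simp only [hLdef, List.mem_dedup, List.mem_filter, List.mem_flatMap, List.mem_tails,
      List.mem_inits, beq_iff_eq]
    obtain ⟨t, hpre, hsuf⟩ := List.infix_iff_prefix_suffix.mp hinf
    exact ⟨⟨t, hsuf, hpre⟩, hm⟩
  set f : List α → Option (List α) × Option α :=
    fun w => (if w.drop 1 = [] then none else some ((w.drop 1).dropLast), w.head?) with hfdef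
  set T : Finset (Option (List α) × Option α) :=
    (insert none (L.toFinset.image some)) ×ˢ (Finset.univ.image (some : α → Option α)) with hTdef
  have hne : ∀ w ∈ M, w ≠ [] := by
    rintro w ⟨-, hni, -⟩ rfl
    exact hni List.nil_infix
  -- image is inside T
  have hsub : f '' M ⊆ ↑T := by
    rintro _ ⟨w, hw, rfl⟩
    obtain ⟨hp, hni, hmid⟩ := hw
    have hwne := hne w ⟨hp, hni, hmid⟩
    simp only [hTdef, Finset.coe_product, Set.mem_prod, Finset.mem_coe, Finset.mem_insert,
      Finset.mem_image, Finset.mem_univ, true_and]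
    constructor
    · by_cases h2 : w.drop 1 = []
      · simp [hfdef, h2, (List.drop_one (l := w)).symm.trans h2]
      · have h2' : ¬ w.tail = [] := by simpa [List.drop_one] using h2
        right
        refine ⟨(w.drop 1).dropLast, ?_, by simp [hfdef, h2', List.drop_one]⟩
        rw [List.mem_toFinset]
        obtain ⟨c, hc⟩ := mapw_recon hp h2
        have hmp : ((w.drop 1).dropLast).reverse = (w.drop 1).dropLast := by
          rw [hc] at hp
          simpa using hp
        exact hmemL _ hmp hmid
    · obtain ⟨a, t, rfl⟩ := List.exists_cons_of_ne_nil hwne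
      exact ⟨a, by simp [hfdef]⟩
  -- injectivity
  have hinj : Set.InjOn f M := by
    intro w₁ h₁ w₂ h₂ hfe
    obtain ⟨hp₁, hni₁, hm₁⟩ := h₁
    obtain ⟨hp₂, hni₂, hm₂⟩ := h₂
    have hfst := congrArg Prod.fst hfe
    have hsnd := congrArg Prod.snd hfe
    simp only [hfdef] at hfst hsnd
    simp only [List.drop_one] at hfst
    by_cases e₁ : w₁.tail = []
    · by_cases e₂ : w₂.tail = []
      · obtain ⟨a, t, rfl⟩ := List.exists_cons_of_ne_nil (hne w₁ ⟨hp₁, hni₁, hm₁⟩)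
        obtain ⟨b, s, rfl⟩ := List.exists_cons_of_ne_nil (hne w₂ ⟨hp₂, hni₂, hm₂⟩)
        simp only [List.tail_cons] at e₁ e₂
        subst e₁; subst e₂
        simpa using hsnd
      · simp [e₁, e₂] at hfst
    · by_cases e₂ : w₂.tail = []
      · simp [e₁, e₂] at hfst
      · have hfst' : (w₁.drop 1).dropLast = (w₂.drop 1).dropLast := by
          simpa [List.drop_one, e₁, e₂] using hfst
        obtain ⟨c₁, hc₁⟩ := mapw_recon hp₁ (by simpa [List.drop_one] using e₁)
        obtain ⟨c₂, hc₂⟩ := mapw_recon hp₂ (by simpa [List.drop_one] using e₂)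
        have hh : some c₁ = some c₂ := by
          rw [hc₁, hc₂] at hsnd
          simpa using hsnd
        rw [hc₁, hc₂, hfst', Option.some_injective _ hh]
  have hfin : M.Finite := Set.Finite.of_finite_image (T.finite_toSet.subset hsub) hinj
  refine ⟨hfin, ?_⟩
  have hcard : T.card = (L.length + 1) * Fintype.card α := by
    rw [hTdef, Finset.card_product]
    have h1 : (Finset.univ.image (some : α → Option α)).card = Fintype.card α := by
      rw [Finset.card_image_of_injective _ (Option.some_injective α), Finset.card_univ]
    have h2 : (insert none (L.toFinset.image some)).card = L.length + 1 := by
      rw [Finset.card_insert_of_notMem (by simp),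
        Finset.card_image_of_injective _ (Option.some_injective _),
        List.toFinset_card_of_nodup (List.nodup_dedup _)]
    rw [h1, h2]
  calc M.ncard = (f '' M).ncard := (Set.ncard_image_of_injOn hinj).symm
    _ ≤ (↑T : Set (Option (List α) × Option α)).ncard :=
        Set.ncard_le_ncard hsub T.finite_toSet
    _ = T.card := Set.ncard_coe_finset T
    _ = (L.length + 1) * Fintype.card α := hcard
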